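/- Let π be the uniform probability measure on the hypercube {−1,1}^d ⊂ ℝ^d, and let Q be a symmetric positive definite d×d matrix with eigenvalues 0 < m := λ_min(Q) < M := λ_max(Q) satisfying M − m < 1. Set T := (1/2) log(1 + M⁻¹) and p_T(x) := ∫ exp(−‖x − e^{−T} y‖² / (2(1 − e^{−2T}))) dπ(y). Then there exists c > 0 such that for all x ∈ ℝ^d: ∇² log p_T(x) ≼ (λ* − c)·I, where λ* := (1 + M⁻¹)/(m⁻¹ − M⁻¹); hence the boosted posterior ν_T of the Ising model ν = T_Q π, whose log-density differs from log p_T by a quadratic with Hessian ≼ −λ* I, is strongly log-concave. -/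

import Mathlib

open MeasureTheory Set Matrix

noncomputable section

/-- The OU-evolved (unnormalized) density of `π` at time `T = ½ log(1 + M⁻¹)`:
`p_T(x) = ∫ exp(-‖x - e^{-T} y‖²/(2(1-e^{-2T}))) dπ(y)`. -/
def pT {d : ℕ} (π : Measure (Fin d → ℝ)) (M : ℝ) (x : Fin d → ℝ) : ℝ :=
  ∫ y, Real.exp (-((x - Real.exp (-((1/2) * Real.log (1 + M⁻¹))) • y) ⬝ᵥ
      (x - Real.exp (-((1/2) * Real.log (1 + M⁻¹))) • y)) /
      (2 * (1 - Real.exp (-2 * ((1/2) * Real.log (1 + M⁻¹)))))) ∂π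

/-- The uniform measure on `{-1, 1} ⊂ ℝ`. -/
def twoPoint : Measure ℝ :=
  (2 : ENNReal)⁻¹ • (Measure.dirac (1:ℝ) + Measure.dirac (-1:ℝ))

/-- The uniform measure on the hypercube `{-1,1}^d ⊂ ℝ^d`. -/
def hypercube (d : ℕ) : Measure (Fin d → ℝ) := Measure.pi fun _ : Fin d => twoPoint

instance : IsProbabilityMeasure twoPoint := by
  constructor
  simp [twoPoint]
  rw [ENNReal.inv_two_add_inv_two]

lemma integral_twoPoint (f : ℝ → ℝ) (hf : Measurable f) :
    ∫ t, f t ∂twoPoint = 2⁻¹ * (f 1 + f (-1)) := by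
  have hi : ∀ c : ℝ, Integrable f (Measure.dirac c) := by
    intro c
    refine ⟨hf.aestronglyMeasurable, ?_⟩
    simp [HasFiniteIntegral, lintegral_dirac]
  rw [twoPoint, integral_smul_measure, integral_add_measure (hi 1) (hi (-1)),
    integral_dirac, integral_dirac]
  simp

lemma integral_hypercube (d : ℕ) (f : Fin d → ℝ → ℝ) :
    ∫ x, ∏ i, f i (x i) ∂(hypercube d) = ∏ i, ∫ t, f i t ∂twoPoint := by
  letI : MeasureSpace ℝ := ⟨twoPoint⟩
  haveI : SigmaFinite (volume : Measure ℝ) := by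
    have h : IsProbabilityMeasure twoPoint := inferInstance
    infer_instance
  exact MeasureTheory.integral_fintype_prod_eq_prod f

/-- `gA a s u = e^{-(u-a)²/(2s)} + e^{-(u+a)²/(2s)}`: the one-dimensional factor of `p_T`. -/
def gA (a s u : ℝ) : ℝ :=
  Real.exp (-((u - a) * (u - a)) / (2 * s)) + Real.exp (-((u + a) * (u + a)) / (2 * s))

/-- First derivative of `gA` in `u`. -/
def gB (a s u : ℝ) : ℝ :=
  (-(u - a) / s) * Real.exp (-((u - a) * (u - a)) / (2 * s)) +
  (-(u + a) / s) * Real.exp (-((u + a) * (u + a)) / (2 * s))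

/-- Second derivative of `gA` in `u`. -/
def gC (a s u : ℝ) : ℝ :=
  ((u - a) * (u - a) / (s * s) - 1 / s) * Real.exp (-((u - a) * (u - a)) / (2 * s)) +
  ((u + a) * (u + a) / (s * s) - 1 / s) * Real.exp (-((u + a) * (u + a)) / (2 * s))

lemma gA_pos (a s u : ℝ) : 0 < gA a s u := by
  unfold gA; positivity

lemma hasDerivAt_expterm (c s : ℝ) (u : ℝ) :
    HasDerivAt (fun u => Real.exp (-((u - c) * (u - c)) / (2 * s)))
      ((-(u - c) / s) * Real.exp (-((u - c) * (u - c)) / (2 * s))) u := by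
  have h0 : HasDerivAt (fun u : ℝ => (u - c) * (u - c)) (1 * (u - c) + (u - c) * 1) u :=
    ((hasDerivAt_id u).sub_const c).mul ((hasDerivAt_id u).sub_const c)
  have h1 : HasDerivAt (fun u : ℝ => -((u - c) * (u - c)) / (2 * s))
      (-(1 * (u - c) + (u - c) * 1) / (2 * s)) u := h0.neg.div_const (2 * s)
  have h2 := h1.exp
  convert h2 using 1
  rcases eq_or_ne s 0 with hs | hs
  · simp [hs]
  · field_simp
    ring

lemma hasDerivAt_gA (a s u : ℝ) : HasDerivAt (gA a s) (gB a s u) u := by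
  have h1 := hasDerivAt_expterm a s u
  have h2 := hasDerivAt_expterm (-a) s u
  simp only [sub_neg_eq_add] at h2
  exact h1.add h2

lemma hasDerivAt_gB (a s u : ℝ) (hs : s ≠ 0) : HasDerivAt (gB a s) (gC a s u) u := by
  have t1 : HasDerivAt (fun u : ℝ => -(u - a) / s) (-1 / s) u :=
    (((hasDerivAt_id u).sub_const a).neg).div_const s
  have t2 : HasDerivAt (fun u : ℝ => -(u + a) / s) (-1 / s) u := by
    have := (((hasDerivAt_id u).sub_const (-a)).neg).div_const s
    simpa [sub_neg_eq_add] using this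
  have e2 := hasDerivAt_expterm (-a) s u
  simp only [sub_neg_eq_add] at e2
  have p1 := t1.fun_mul (hasDerivAt_expterm a s u)
  have p2 := t2.fun_mul e2
  have := p1.fun_add p2
  refine this.congr_deriv ?_
  unfold gC
  field_simp
  ring

lemma hasDerivAt_psi (a s u : ℝ) (hs : s ≠ 0) :
    HasDerivAt (fun u => gB a s u / gA a s u)
      ((gC a s u * gA a s u - gB a s u * gB a s u) / (gA a s u) ^ 2) u :=
  (hasDerivAt_gB a s u hs).div (hasDerivAt_gA a s u) (gA_pos a s u).ne'

lemma hasDerivAt_phi (a s u : ℝ) (hs : s ≠ 0) :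
    HasDerivAt (fun u => Real.log ((2:ℝ)⁻¹ * gA a s u)) (gB a s u / gA a s u) u := by
  have h : HasDerivAt (fun u => (2:ℝ)⁻¹ * gA a s u) ((2:ℝ)⁻¹ * gB a s u) u :=
    (hasDerivAt_gA a s u).const_mul _
  have := h.log (mul_pos (by norm_num) (gA_pos a s u)).ne'
  convert this using 1
  rw [mul_div_mul_left _ _ (by norm_num : ((2:ℝ)⁻¹) ≠ 0)]

/-- The key one-dimensional bound `(log gA)'' ≤ (a² - s)/s²`. -/
lemma psi_deriv_le (a s u : ℝ) (hs : 0 < s) :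
    (gC a s u * gA a s u - gB a s u * gB a s u) / (gA a s u) ^ 2 ≤ (a * a - s) / (s * s) := by
  rw [div_le_div_iff₀ (pow_pos (gA_pos a s u) 2) (mul_pos hs hs)]
  set E1 := Real.exp (-((u - a) * (u - a)) / (2 * s)) with hE1
  set E2 := Real.exp (-((u + a) * (u + a)) / (2 * s)) with hE2
  have hE1p : 0 < E1 := Real.exp_pos _
  have hE2p : 0 < E2 := Real.exp_pos _
  have hid : (gC a s u * gA a s u - gB a s u * gB a s u) * (s * s)
      = -s * (E1 + E2) ^ 2 + 4 * (a * a) * (E1 * E2) := by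
    unfold gC gA gB
    rw [← hE1, ← hE2]
    field_simp
    ring
  have hga : gA a s u = E1 + E2 := rfl
  rw [hid, hga]
  nlinarith [sq_nonneg (a * (E1 - E2)), sq_nonneg (E1 + E2), hs.le]

lemma fderiv_sum_comp (d : ℕ) (φ ψ : Fin d → ℝ → ℝ)
    (h : ∀ i t, HasDerivAt (φ i) (ψ i t) t) (y v : Fin d → ℝ) :
    fderiv ℝ (fun u : Fin d → ℝ => ∑ i, φ i (u i)) y v = ∑ i, v i * ψ i (y i) := by
  have H : HasFDerivAt (fun u : Fin d → ℝ => ∑ i, φ i (u i))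
      (∑ i, ((1 : ℝ →L[ℝ] ℝ).smulRight (ψ i (y i))).comp
        (ContinuousLinearMap.proj (R := ℝ) (φ := fun _ : Fin d => ℝ) i)) y := by
    refine HasFDerivAt.fun_sum fun i _ => ?_
    have hp : HasFDerivAt (fun u : Fin d → ℝ => u i)
        (ContinuousLinearMap.proj (R := ℝ) (φ := fun _ : Fin d => ℝ) i) y :=
      (ContinuousLinearMap.proj (R := ℝ) (φ := fun _ : Fin d => ℝ) i).hasFDerivAt
    exact (h i (y i)).hasFDerivAt.comp y hp
  rw [H.fderiv]
  simp [ContinuousLinearMap.sum_apply, ContinuousLinearMap.comp_apply,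
    ContinuousLinearMap.smulRight_apply, ContinuousLinearMap.proj_apply,
    ContinuousLinearMap.one_apply, smul_eq_mul]

lemma pT_eq (d : ℕ) (M : ℝ) (x : Fin d → ℝ) :
    pT (hypercube d) M x
      = ∏ i, ((2:ℝ)⁻¹ * gA (Real.exp (-((1/2) * Real.log (1 + M⁻¹))))
          (1 - Real.exp (-2 * ((1/2) * Real.log (1 + M⁻¹)))) (x i)) := by
  unfold pT
  set A := Real.exp (-((1/2) * Real.log (1 + M⁻¹))) with hA
  set S := 1 - Real.exp (-2 * ((1/2) * Real.log (1 + M⁻¹))) with hS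
  have h1 : ∀ y : Fin d → ℝ, Real.exp (-((x - A • y) ⬝ᵥ (x - A • y)) / (2 * S))
      = ∏ i, Real.exp (-((x i - A * y i) * (x i - A * y i)) / (2 * S)) := by
    intro y
    rw [← Real.exp_sum]
    congr 1
    rw [dotProduct]
    simp only [Pi.sub_apply, Pi.smul_apply, smul_eq_mul]
    rw [← Finset.sum_neg_distrib, Finset.sum_div]
  simp_rw [h1]
  rw [integral_hypercube d (fun i t => Real.exp (-((x i - A * t) * (x i - A * t)) / (2 * S)))]
  refine Finset.prod_congr rfl fun i _ => ?_
  rw [integral_twoPoint _ (by fun_prop)]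
  unfold gA
  rw [show x i - A * 1 = x i - A by ring, show x i - A * (-1) = x i + A by ring]

/-- **Tilted transport for Ising models.**  Let `π` be the uniform measure on the hypercube
`{-1,1}^d` and `Q` symmetric positive definite with extreme eigenvalues `0 < m < M`
satisfying `M - m < 1`.  Then `∇² log p_T ≼ (λ* - c)·I` for some `c > 0`, where
`λ* = (1+M⁻¹)/(m⁻¹-M⁻¹)`; hence the boosted posterior `ν_T` of the Ising model `T_Q π`,
whose log-density differs from `log p_T` by a quadratic with Hessian `≼ -λ*·I`, is strongly
log-concave. -/
theorem ising_boosted_logconcave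
    (d : ℕ) (Q : Matrix (Fin d) (Fin d) ℝ) (hQ : Q.PosDef)
    (M m : ℝ) (hm : 0 < m) (hmM : m < M)
    (hMub : (M • (1 : Matrix (Fin d) (Fin d) ℝ) - Q).PosSemidef)
    (hMmem : M ∈ spectrum ℝ Q)
    (hmlb : (Q - m • (1 : Matrix (Fin d) (Fin d) ℝ)).PosSemidef)
    (hmmem : m ∈ spectrum ℝ Q)
    (hgap : M - m < 1) :
    ∃ c > 0, ∀ x v : Fin d → ℝ,
      fderiv ℝ (fun y => fderiv ℝ
          (fun u => Real.log (pT (hypercube d) M u)) y v) x v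
        ≤ ((1 + M⁻¹)/(m⁻¹ - M⁻¹) - c) * (v ⬝ᵥ v) := by
  have hM : 0 < M := lt_trans hm hmM
  set A := Real.exp (-((1/2) * Real.log (1 + M⁻¹))) with hAdef
  set S := 1 - Real.exp (-2 * ((1/2) * Real.log (1 + M⁻¹))) with hSdef
  have h1M : (0:ℝ) < 1 + M⁻¹ := by positivity
  have h2T : Real.exp (-2 * ((1/2) * Real.log (1 + M⁻¹))) = (1 + M⁻¹)⁻¹ := by
    rw [show -2 * ((1/2) * Real.log (1 + M⁻¹)) = -Real.log (1 + M⁻¹) by ring,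
      Real.exp_neg, Real.exp_log h1M]
  have hAA : A * A = (1 + M⁻¹)⁻¹ := by
    rw [hAdef, ← Real.exp_add,
      show (-((1/2) * Real.log (1 + M⁻¹)) + -((1/2) * Real.log (1 + M⁻¹)))
        = -2 * ((1/2) * Real.log (1 + M⁻¹)) by ring, h2T]
  have hSval : S = 1 - (1 + M⁻¹)⁻¹ := by rw [hSdef, h2T]
  have hSpos : 0 < S := by
    have h1 : (1 + M⁻¹)⁻¹ < 1 := by
      rw [inv_lt_one_iff₀]
      right
      have : 0 < M⁻¹ := inv_pos.mpr hM
      linarith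
    rw [hSval]; linarith
  set K := (A * A - S) / (S * S) with hKdef
  have hKval : K = (M - 1) * (M + 1) := by
    rw [hKdef, hAA, hSval]
    have hM1 : M + 1 ≠ 0 := by positivity
    have hMne : M ≠ 0 := hM.ne'
    field_simp
    ring
  have hinv : M⁻¹ < m⁻¹ := by
    rw [inv_lt_inv₀ hM hm] at *
    exact hmM
  have hden : 0 < m⁻¹ - M⁻¹ := sub_pos.mpr hinv
  have hMm : (0:ℝ) < M - m := sub_pos.mpr hmM
  have hlam : (1 + M⁻¹)/(m⁻¹ - M⁻¹) = m * (M + 1) / (M - m) := by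
    rw [div_eq_div_iff hden.ne' hMm.ne']
    field_simp
  have hKlt : K < (1 + M⁻¹)/(m⁻¹ - M⁻¹) := by
    rw [hKval, hlam, lt_div_iff₀ hMm]
    have key : (M - 1) * (M - m) < m := by
      nlinarith [mul_lt_mul_of_pos_left hgap hM]
    nlinarith [mul_lt_mul_of_pos_left key (show (0:ℝ) < M + 1 by linarith)]
  refine ⟨(1 + M⁻¹)/(m⁻¹ - M⁻¹) - K, by linarith, ?_⟩
  intro x v
  have hφ : ∀ t, HasDerivAt (fun t => Real.log ((2:ℝ)⁻¹ * gA A S t)) (gB A S t / gA A S t) t :=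
    fun t => hasDerivAt_phi A S t hSpos.ne'
  have hψ : ∀ t, HasDerivAt (fun t => gB A S t / gA A S t)
      ((gC A S t * gA A S t - gB A S t * gB A S t) / (gA A S t) ^ 2) t :=
    fun t => hasDerivAt_psi A S t hSpos.ne'
  have hlog : (fun u : Fin d → ℝ => Real.log (pT (hypercube d) M u))
      = fun u => ∑ i, Real.log ((2:ℝ)⁻¹ * gA A S (u i)) := by
    funext u
    rw [pT_eq d M u, ← hAdef, ← hSdef, Real.log_prod]
    intro i _
    exact (mul_pos (by norm_num) (gA_pos A S (u i))).ne'
  have hinner : ∀ y : Fin d → ℝ,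
      fderiv ℝ (fun u => Real.log (pT (hypercube d) M u)) y v
        = ∑ i, v i * (gB A S (y i) / gA A S (y i)) := by
    intro y
    rw [hlog]
    exact fderiv_sum_comp d (fun _ t => Real.log ((2:ℝ)⁻¹ * gA A S t))
      (fun _ t => gB A S t / gA A S t) (fun _ t => hφ t) y v
  have houter : fderiv ℝ (fun y => fderiv ℝ
      (fun u => Real.log (pT (hypercube d) M u)) y v) x v
      = ∑ i, v i * (v i * ((gC A S (x i) * gA A S (x i) - gB A S (x i) * gB A S (x i))
        / (gA A S (x i)) ^ 2)) := by
    have hfun : (fun y : Fin d → ℝ => fderiv ℝ (fun u => Real.log (pT (hypercube d) M u)) y v)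
        = fun y => ∑ i, v i * (gB A S (y i) / gA A S (y i)) := funext hinner
    rw [hfun]
    exact fderiv_sum_comp d (fun i t => v i * (gB A S t / gA A S t))
      (fun i t => v i * ((gC A S t * gA A S t - gB A S t * gB A S t) / (gA A S t) ^ 2))
      (fun i t => (hψ t).const_mul (v i)) x v
  have hsum : ∑ i, v i * (v i * ((gC A S (x i) * gA A S (x i) - gB A S (x i) * gB A S (x i))
        / (gA A S (x i)) ^ 2)) ≤ ∑ i, v i * v i * K := by
    refine Finset.sum_le_sum fun i _ => ?_
    have h1 := psi_deriv_le A S (x i) hSpos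
    calc v i * (v i * ((gC A S (x i) * gA A S (x i) - gB A S (x i) * gB A S (x i))
          / (gA A S (x i)) ^ 2))
        = (v i * v i) * ((gC A S (x i) * gA A S (x i) - gB A S (x i) * gB A S (x i))
          / (gA A S (x i)) ^ 2) := by ring
      _ ≤ (v i * v i) * K := mul_le_mul_of_nonneg_left h1 (mul_self_nonneg (v i))
  have hdot : ∑ i, v i * v i * K = K * (v ⬝ᵥ v) := by
    rw [show v ⬝ᵥ v = ∑ i, v i * v i from rfl, ← Finset.sum_mul, mul_comm]
  calc fderiv ℝ (fun y => fderiv ℝ (fun u => Real.log (pT (hypercube d) M u)) y v) x v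
      = ∑ i, v i * (v i * ((gC A S (x i) * gA A S (x i) - gB A S (x i) * gB A S (x i))
        / (gA A S (x i)) ^ 2)) := houter
    _ ≤ K * (v ⬝ᵥ v) := hdot ▸ hsum
    _ = ((1 + M⁻¹)/(m⁻¹ - M⁻¹) - ((1 + M⁻¹)/(m⁻¹ - M⁻¹) - K)) * (v ⬝ᵥ v) := by ring
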